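/- Under the compatibility condition, with φ_k = e^{λψ_k} and ε = (e^{λτ} − 1) e^{λ m} where m = min_k inf_M ψ_k, for every x ∈ M \ Ω and every k' with |∇ψ_{k'}(x)| < ρ one has e^{φ_{k'}(x)/h} ≤ e^{−ε/h} ∑_{k=1}^n e^{φ_k(x)/h}. -/

import Mathlib

open scoped BigOperators

set_option maxHeartbeats 1000000

/-- Under the compatibility condition, with `φ_k = e^{λψ_k}`, `m ≤ ψ_k` and
`ε = (e^{λτ} - 1) e^{λm}`: at every `x ∈ M \ Ω` and for every `k'` with `‖∇ψ_{k'}(x)‖ < ρ`,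
`e^{φ_{k'}(x)/h} ≤ e^{-ε/h} ∑_k e^{φ_k(x)/h}`. -/
theorem small_gradient_weight_dominated {E : Type*} [NormedAddCommGroup E]
    [InnerProductSpace ℝ E] [CompleteSpace E] (n : ℕ) (Ω : Set E)
    (ψ : Fin n → E → ℝ) (ρ τ lam m : ℝ) (hρ : 0 < ρ) (hτ : 0 < τ) (hlam : 0 < lam)
    (hm : ∀ k x, m ≤ ψ k x)
    (hcompat : ∀ x ∉ Ω, ∀ k : Fin n, ‖gradient (ψ k) x‖ < ρ →
      ∃ l : Fin n, ρ ≤ ‖gradient (ψ l) x‖ ∧ ψ k x + τ ≤ ψ l x) :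
    ∀ h : ℝ, 0 < h → ∀ x ∉ Ω, ∀ k' : Fin n, ‖gradient (ψ k') x‖ < ρ →
      Real.exp (Real.exp (lam * ψ k' x) / h) ≤
        Real.exp (-((Real.exp (lam * τ) - 1) * Real.exp (lam * m)) / h) *
          ∑ k : Fin n, Real.exp (Real.exp (lam * ψ k x) / h) := by
  intro h hh x hx k' hk'
  obtain ⟨l, -, hl⟩ := hcompat x hx k' hk'
  set ε := (Real.exp (lam * τ) - 1) * Real.exp (lam * m) with hε
  -- key: ε ≤ φ_l - φ_{k'}
  have key : ε + Real.exp (lam * ψ k' x) ≤ Real.exp (lam * ψ l x) := by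
    have h1 : Real.exp (lam * τ) * Real.exp (lam * ψ k' x) ≤ Real.exp (lam * ψ l x) := by
      rw [← Real.exp_add, ← mul_add]
      exact Real.exp_le_exp.2 (mul_le_mul_of_nonneg_left (by linarith) hlam.le)
    have h2 : (Real.exp (lam * τ) - 1) * Real.exp (lam * m) ≤
        (Real.exp (lam * τ) - 1) * Real.exp (lam * ψ k' x) := by
      have := Real.one_le_exp (by positivity : (0:ℝ) ≤ lam * τ)
      exact mul_le_mul_of_nonneg_left
        (Real.exp_le_exp.2 (mul_le_mul_of_nonneg_left (hm k' x) hlam.le)) (by linarith)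
    have h3 : (Real.exp (lam * τ) - 1) * Real.exp (lam * ψ k' x) + Real.exp (lam * ψ k' x)
        = Real.exp (lam * τ) * Real.exp (lam * ψ k' x) := by ring
    linarith
  have step : Real.exp (Real.exp (lam * ψ k' x) / h) ≤
      Real.exp (-ε / h) * Real.exp (Real.exp (lam * ψ l x) / h) := by
    rw [← Real.exp_add]
    apply Real.exp_le_exp.2
    rw [← add_div]
    gcongr
    linarith
  refine step.trans ?_
  gcongr
  exact Finset.single_le_sum (f := fun k => Real.exp (Real.exp (lam * ψ k x) / h))
    (fun k _ => (Real.exp_pos _).le) (Finset.mem_univ l)
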